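/- Let C be an abelian category equipped with a monoidal structure whose tensor product is additive in each variable and biexact (for every object X, the functors X ⊗ − and − ⊗ X are exact), and in which every object Y has a right dual ^*Y with evaluation ẽv_Y : Y ⊗ ^*Y → 1 and coevaluation c̃oev_Y : 1 → ^*Y ⊗ Y satisfying the zig-zag identities, where 1 is the tensor unit. Assume there exist a projective object P of C and an epimorphism p : P → 1. Let X be an object of C and let η = (η_Y : ^*Y ⊗ Y → X)_{Y ∈ C} be a dinatural transformation, i.e. for every morphism f : Y → Z one has η_Y ∘ (^*f ⊗ id_Y) = η_Z ∘ (id_{^*Z} ⊗ f) as morphisms ^*Z ⊗ Y → X. Suppose 0 → A →^f B →^g C → 0 is a short exact sequence in C and a ∈ End(A), b ∈ End(B), c ∈ End(C) satisfy f ∘ a = b ∘ f and g ∘ b = c ∘ g. Then η_B ∘ (id_{^*B} ⊗ b) ∘ c̃oev_B = η_A ∘ (id_{^*A} ⊗ a) ∘ c̃oev_A + η_C ∘ (id_{^*C} ⊗ c) ∘ c̃oev_C as morphisms 1 → X. -/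

import Mathlib

universe v u

open CategoryTheory MonoidalCategory

/-- In an abelian monoidal category with biadditive biexact tensor product
and right duals (formalised via Mathlib's left duals `ᘁY`, whose evaluation and coevaluation
are `Y ⊗ ᘁY ⟶ 𝟙` and `𝟙 ⟶ ᘁY ⊗ Y`), assuming a projective object `P` with an epimorphism
`P ⟶ 𝟙_C`, any dinatural transformation `d` from `ᘁ(-) ⊗ (-)` to an object `T` satisfies the
additivity relation along a short exact sequence `0 → A → B → C → 0` with compatible
endomorphisms `a, b, c`. -/
theorem dinatural_additive_on_short_exact
    (C : Type u) [Category.{v} C] [Abelian C] [MonoidalCategory C]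
    [∀ X : C, (tensorLeft X).Additive] [∀ X : C, (tensorRight X).Additive]
    [∀ X : C, Limits.PreservesFiniteLimits (tensorLeft X)]
    [∀ X : C, Limits.PreservesFiniteColimits (tensorLeft X)]
    [∀ X : C, Limits.PreservesFiniteLimits (tensorRight X)]
    [∀ X : C, Limits.PreservesFiniteColimits (tensorRight X)]
    [∀ X : C, HasLeftDual X]
    (P : C) (hP : Projective P) (p : P ⟶ 𝟙_ C) [Epi p]
    (T : C)
    (d : ∀ Y : C, (ᘁY) ⊗ Y ⟶ T)
    (hd : ∀ {Y Z : C} (f : Y ⟶ Z), (ᘁf) ▷ Y ≫ d Y = (ᘁZ) ◁ f ≫ d Z)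
    (S : ShortComplex C) (hS : S.ShortExact)
    (a : S.X₁ ⟶ S.X₁) (b : S.X₂ ⟶ S.X₂) (c : S.X₃ ⟶ S.X₃)
    (hab : a ≫ S.f = S.f ≫ b) (hbc : b ≫ S.g = S.g ≫ c) :
    η_ (ᘁS.X₂) S.X₂ ≫ (ᘁS.X₂) ◁ b ≫ d S.X₂ =
      η_ (ᘁS.X₁) S.X₁ ≫ (ᘁS.X₁) ◁ a ≫ d S.X₁ +
        η_ (ᘁS.X₃) S.X₃ ≫ (ᘁS.X₃) ◁ c ≫ d S.X₃ := by
  have : Projective P := hP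
  -- zero whiskering lemmas
  have h0L : ∀ (X : C) {Y Z : C}, X ◁ (0 : Y ⟶ Z) = (0 : X ⊗ Y ⟶ X ⊗ Z) := by
    intro X Y Z
    change (tensorLeft X).map _ = _
    exact (tensorLeft X).map_zero _ _
  have h0R : ∀ (X : C) {Y Z : C}, (0 : Y ⟶ Z) ▷ X = (0 : Y ⊗ X ⟶ Z ⊗ X) := by
    intro X Y Z
    change (tensorRight X).map _ = _
    exact (tensorRight X).map_zero _ _
  -- the left adjoint mate of the zero morphism is zero
  have hmate0 : (ᘁ(0 : S.X₁ ⟶ S.X₃)) = 0 := by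
    simp only [leftAdjointMate, h0L, h0R, Limits.zero_comp, Limits.comp_zero]
  -- tensored short exact sequences
  have hS3 : (S.map (tensorLeft (ᘁS.X₃))).ShortExact := hS.map_of_exact _
  have hS2 : (S.map (tensorLeft (ᘁS.X₂))).ShortExact := hS.map_of_exact _
  have hS1 : (S.map (tensorLeft (ᘁS.X₁))).ShortExact := hS.map_of_exact _
  have epi3 : Epi ((ᘁS.X₃) ◁ S.g) := hS3.epi_g
  have mono2 : Mono ((S.map (tensorLeft (ᘁS.X₂))).f) := hS2.mono_f
  have mono1 : Mono ((ᘁS.X₁) ◁ S.f) := hS1.mono_f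
  -- lift along the epimorphism ᘁC ◁ g using projectivity of P
  set β : P ⟶ (ᘁS.X₃) ⊗ S.X₂ :=
    Projective.factorThru (p ≫ η_ (ᘁS.X₃) S.X₃ ≫ (ᘁS.X₃) ◁ c) ((ᘁS.X₃) ◁ S.g) with hβdef
  have hβ : β ≫ (ᘁS.X₃) ◁ S.g = p ≫ η_ (ᘁS.X₃) S.X₃ ≫ (ᘁS.X₃) ◁ c :=
    Projective.factorThru_comp _ _
  -- key vanishing: the difference composed with ᘁB ◁ g is zero
  have E1 : (p ≫ η_ (ᘁS.X₂) S.X₂ ≫ (ᘁS.X₂) ◁ b - β ≫ (ᘁS.g) ▷ S.X₂) ≫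
      ((ᘁS.X₂) ◁ S.g) = 0 := by
    rw [Preadditive.sub_comp, sub_eq_zero]
    calc (p ≫ η_ (ᘁS.X₂) S.X₂ ≫ (ᘁS.X₂) ◁ b) ≫ (ᘁS.X₂) ◁ S.g
        = p ≫ η_ (ᘁS.X₂) S.X₂ ≫ (ᘁS.X₂) ◁ (b ≫ S.g) := by
          simp [MonoidalCategory.whiskerLeft_comp]
      _ = p ≫ η_ (ᘁS.X₂) S.X₂ ≫ (ᘁS.X₂) ◁ S.g ≫ (ᘁS.X₂) ◁ c := by
          rw [hbc, MonoidalCategory.whiskerLeft_comp]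
      _ = p ≫ η_ (ᘁS.X₃) S.X₃ ≫ (ᘁS.g) ▷ S.X₃ ≫ (ᘁS.X₂) ◁ c := by
          rw [← Category.assoc (η_ (ᘁS.X₂) S.X₂), ← coevaluation_comp_leftAdjointMate (S.g),
            Category.assoc]
      _ = p ≫ η_ (ᘁS.X₃) S.X₃ ≫ (ᘁS.X₃) ◁ c ≫ (ᘁS.g) ▷ S.X₃ := by
          rw [← whisker_exchange]
      _ = (β ≫ (ᘁS.X₃) ◁ S.g) ≫ (ᘁS.g) ▷ S.X₃ := by
          rw [hβ]; simp only [Category.assoc]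
      _ = (β ≫ (ᘁS.g) ▷ S.X₂) ≫ (ᘁS.X₂) ◁ S.g := by
          simp only [Category.assoc, whisker_exchange]
  -- the lift through ᘁB ⊗ A
  set α : P ⟶ (ᘁS.X₂) ⊗ S.X₁ :=
    hS2.exact.lift (p ≫ η_ (ᘁS.X₂) S.X₂ ≫ (ᘁS.X₂) ◁ b - β ≫ (ᘁS.g) ▷ S.X₂) E1 with hαdef
  have hα : α ≫ (ᘁS.X₂) ◁ S.f =
      p ≫ η_ (ᘁS.X₂) S.X₂ ≫ (ᘁS.X₂) ◁ b - β ≫ (ᘁS.g) ▷ S.X₂ :=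
    hS2.exact.lift_f _ E1
  -- β composed with (mate of g) ▷ then (mate of f) ▷ vanishes
  have hβ0 : β ≫ (ᘁS.g) ▷ S.X₂ ≫ (ᘁS.f) ▷ S.X₂ = 0 := by
    rw [← comp_whiskerRight, ← comp_leftAdjointMate, S.zero, hmate0, h0R]
    simp
  -- key identification of the "A-part" of the lift
  have keyA : α ≫ (ᘁS.f) ▷ S.X₁ = p ≫ η_ (ᘁS.X₁) S.X₁ ≫ (ᘁS.X₁) ◁ a := by
    rw [← cancel_mono ((ᘁS.X₁) ◁ S.f)]
    calc (α ≫ (ᘁS.f) ▷ S.X₁) ≫ (ᘁS.X₁) ◁ S.f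
        = α ≫ (ᘁS.X₂) ◁ S.f ≫ (ᘁS.f) ▷ S.X₂ := by
          simp only [Category.assoc, ← whisker_exchange]
      _ = (p ≫ η_ (ᘁS.X₂) S.X₂ ≫ (ᘁS.X₂) ◁ b - β ≫ (ᘁS.g) ▷ S.X₂) ≫ (ᘁS.f) ▷ S.X₂ := by
          rw [← Category.assoc, hα]
      _ = p ≫ η_ (ᘁS.X₂) S.X₂ ≫ (ᘁS.X₂) ◁ b ≫ (ᘁS.f) ▷ S.X₂ := by
          rw [Preadditive.sub_comp]
          simp only [Category.assoc, hβ0, Limits.comp_zero, sub_zero]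
      _ = p ≫ η_ (ᘁS.X₂) S.X₂ ≫ (ᘁS.f) ▷ S.X₂ ≫ (ᘁS.X₁) ◁ b := by
          rw [whisker_exchange]
      _ = p ≫ η_ (ᘁS.X₁) S.X₁ ≫ (ᘁS.X₁) ◁ S.f ≫ (ᘁS.X₁) ◁ b := by
          rw [← Category.assoc (η_ (ᘁS.X₂) S.X₂), coevaluation_comp_leftAdjointMate (S.f),
            Category.assoc]
      _ = p ≫ η_ (ᘁS.X₁) S.X₁ ≫ (ᘁS.X₁) ◁ (a ≫ S.f) := by
          rw [← MonoidalCategory.whiskerLeft_comp, hab, MonoidalCategory.whiskerLeft_comp]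
      _ = (p ≫ η_ (ᘁS.X₁) S.X₁ ≫ (ᘁS.X₁) ◁ a) ≫ (ᘁS.X₁) ◁ S.f := by
          rw [MonoidalCategory.whiskerLeft_comp]; simp only [Category.assoc]
  -- conclude, cancelling the epimorphism p
  rw [← cancel_epi p, Preadditive.comp_add]
  calc p ≫ η_ (ᘁS.X₂) S.X₂ ≫ (ᘁS.X₂) ◁ b ≫ d S.X₂
      = (p ≫ η_ (ᘁS.X₂) S.X₂ ≫ (ᘁS.X₂) ◁ b) ≫ d S.X₂ := by
        simp only [Category.assoc]
    _ = (α ≫ (ᘁS.X₂) ◁ S.f + β ≫ (ᘁS.g) ▷ S.X₂) ≫ d S.X₂ := by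
        rw [hα, sub_add_cancel]
    _ = α ≫ ((ᘁS.f) ▷ S.X₁ ≫ d S.X₁) + β ≫ ((ᘁS.g) ▷ S.X₂ ≫ d S.X₂) := by
        rw [Preadditive.add_comp, hd S.f]
        simp only [Category.assoc]
    _ = (α ≫ (ᘁS.f) ▷ S.X₁) ≫ d S.X₁ + (β ≫ (ᘁS.X₃) ◁ S.g) ≫ d S.X₃ := by
        rw [hd S.g]
        simp only [Category.assoc]
    _ = p ≫ (η_ (ᘁS.X₁) S.X₁ ≫ (ᘁS.X₁) ◁ a ≫ d S.X₁) +
        p ≫ (η_ (ᘁS.X₃) S.X₃ ≫ (ᘁS.X₃) ◁ c ≫ d S.X₃) := by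
        rw [keyA, hβ]
        simp only [Category.assoc]
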